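/- Let f be a non-increasing nonnegative function on {1,…,k} and let I_u ⊆ {1,…,k} be an interval of even cardinality with left half I_v and right half I_w. Then Σ_{x∈I_u} |f̄_{I_u} − f(x)| ≤ 5 (f_{I_v} − f_{I_w}). -/

import Mathlib

open Finset

/-- Let `f` be a non-increasing nonnegative function on `{1, …, k}` and let
`I_u = {a, …, a + 2m - 1} ⊆ {1, …, k}` be an interval of even cardinality with left
half `I_v = {a, …, a + m - 1}` and right half `I_w = {a + m, …, a + 2m - 1}`. Then
`∑_{x ∈ I_u} |f̄_{I_u} - f x| ≤ 5 (f_{I_v} - f_{I_w})`, where `f_I = ∑_{x ∈ I} f x`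
and `f̄_I = f_I / |I|`. -/
theorem stmt7 (k a m : ℕ) (ha : 1 ≤ a) (hm : 1 ≤ m) (hk : a + 2 * m ≤ k + 1)
    (f : ℕ → ℝ) (hf0 : ∀ x, 0 ≤ f x)
    (hmono : ∀ x, 1 ≤ x → x + 1 ≤ k → f (x + 1) ≤ f x) :
    ∑ x ∈ Finset.Ico a (a + 2 * m),
        |(∑ y ∈ Finset.Ico a (a + 2 * m), f y) / (2 * (m : ℝ)) - f x| ≤
      5 * (∑ x ∈ Finset.Ico a (a + m), f x - ∑ x ∈ Finset.Ico (a + m) (a + 2 * m), f x) := by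
  -- monotonicity across the range
  have hmono' : ∀ x y, 1 ≤ x → x ≤ y → y ≤ k → f y ≤ f x := by
    intro x y hx hxy
    induction hxy with
    | refl => intro _; exact le_rfl
    | @step n hn ih =>
      intro hnk
      exact (hmono n (hx.trans hn) hnk).trans (ih (by omega))
  have hm0 : (0:ℝ) < (m:ℝ) := by exact_mod_cast hm
  set μ : ℝ := (∑ y ∈ Finset.Ico a (a + 2 * m), f y) / (2 * (m : ℝ)) with hμ
  set Sv : ℝ := ∑ x ∈ Finset.Ico a (a + m), f x with hSv
  set Sw : ℝ := ∑ x ∈ Finset.Ico (a + m) (a + 2 * m), f x with hSw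
  have hsplit : ∑ y ∈ Finset.Ico a (a + 2 * m), f y = Sv + Sw := by
    rw [hSv, hSw, Finset.sum_Ico_consecutive] <;> omega
  -- general reindexing lemma
  have hre : ∀ g : ℕ → ℝ, ∑ x ∈ Finset.Ico a (a + m), g (x + m)
      = ∑ x ∈ Finset.Ico (a + m) (a + 2 * m), g x := by
    intro g
    rw [Finset.sum_Ico_eq_sum_range, Finset.sum_Ico_eq_sum_range]
    have h1 : a + m - a = m := by omega
    have h2 : a + 2 * m - (a + m) = m := by omega
    rw [h1, h2]
    apply Finset.sum_congr rfl
    intro i _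
    congr 1
    omega
  -- f (a+m) compared to halves
  have hfam_v : ∀ x ∈ Finset.Ico a (a + m), f (a + m) ≤ f x := by
    intro x hx
    rw [Finset.mem_Ico] at hx
    exact hmono' x (a + m) (by omega) (by omega) (by omega)
  have hfam_w : ∀ x ∈ Finset.Ico (a + m) (a + 2 * m), f x ≤ f (a + m) := by
    intro x hx
    rw [Finset.mem_Ico] at hx
    exact hmono' (a + m) x (by omega) (by omega) (by omega)
  have hcv : (Finset.Ico a (a + m)).card = m := by rw [Nat.card_Ico]; omega
  have hcw : (Finset.Ico (a + m) (a + 2 * m)).card = m := by rw [Nat.card_Ico]; omega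
  have hmf_le_Sv : (m : ℝ) * f (a + m) ≤ Sv := by
    have := Finset.sum_le_sum hfam_v
    rwa [Finset.sum_const, hcv, nsmul_eq_mul] at this
  have hSw_le_mf : Sw ≤ (m : ℝ) * f (a + m) := by
    have := Finset.sum_le_sum hfam_w
    rwa [Finset.sum_const, hcw, nsmul_eq_mul] at this
  have hD : 0 ≤ Sv - Sw := by linarith
  -- mean deviation sums to zero
  have hzero : ∑ x ∈ Finset.Ico a (a + 2 * m), (f x - μ) = 0 := by
    rw [Finset.sum_sub_distrib, Finset.sum_const, Nat.card_Ico]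
    have : a + 2 * m - a = 2 * m := by omega
    rw [this, nsmul_eq_mul, hμ, hsplit]
    push_cast
    field_simp
    ring
  -- |t| = 2 max t 0 - t
  have habs : ∀ t : ℝ, |t| = 2 * max t 0 - t := by
    intro t
    rcases le_total t 0 with h | h
    · rw [abs_of_nonpos h, max_eq_right h]; ring
    · rw [abs_of_nonneg h, max_eq_left h]; ring
  have hflip : ∑ x ∈ Finset.Ico a (a + 2 * m), |μ - f x|
      = 2 * ∑ x ∈ Finset.Ico a (a + 2 * m), max (f x - μ) 0 := by
    have : ∀ x, |μ - f x| = 2 * max (f x - μ) 0 - (f x - μ) := by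
      intro x; rw [← abs_neg]; simpa using habs (f x - μ)
    rw [Finset.sum_congr rfl fun x _ => this x, Finset.sum_sub_distrib, hzero,
      ← Finset.mul_sum]
    ring
  -- bound on the right half positive parts
  have hw_bound : ∑ x ∈ Finset.Ico (a + m) (a + 2 * m), max (f x - μ) 0
      ≤ (Sv - Sw) / 2 := by
    have hterm : ∀ x ∈ Finset.Ico (a + m) (a + 2 * m),
        max (f x - μ) 0 ≤ (Sv - Sw) / (2 * m) := by
      intro x hx
      have h1 : f x ≤ f (a + m) := hfam_w x hx
      have h2 : f (a + m) ≤ Sv / m := by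
        rw [le_div_iff₀ hm0]; linarith
      have hμval : μ = (Sv + Sw) / (2 * m) := by rw [hμ, hsplit]
      apply max_le
      · rw [hμval]
        have h3 : (Sv - Sw) / (2 * (m:ℝ)) + (Sv + Sw) / (2 * m) = Sv / m := by
          field_simp; ring
        linarith [h1.trans h2]
      · positivity
    calc ∑ x ∈ Finset.Ico (a + m) (a + 2 * m), max (f x - μ) 0
        ≤ ∑ _x ∈ Finset.Ico (a + m) (a + 2 * m), (Sv - Sw) / (2 * m) :=
          Finset.sum_le_sum hterm
      _ = (m : ℝ) * ((Sv - Sw) / (2 * m)) := by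
          rw [Finset.sum_const, hcw, nsmul_eq_mul]
      _ = (Sv - Sw) / 2 := by field_simp
  -- bound on the left half positive parts
  have hv_bound : ∑ x ∈ Finset.Ico a (a + m), max (f x - μ) 0
      ≤ (Sv - Sw) + ∑ x ∈ Finset.Ico (a + m) (a + 2 * m), max (f x - μ) 0 := by
    have hterm : ∀ x ∈ Finset.Ico a (a + m),
        max (f x - μ) 0 ≤ (f x - f (x + m)) + max (f (x + m) - μ) 0 := by
      intro x hx
      rw [Finset.mem_Ico] at hx
      have hle : f (x + m) ≤ f x := hmono' x (x + m) (by omega) (by omega) (by omega)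
      have h1 : f (x + m) - μ ≤ max (f (x + m) - μ) 0 := le_max_left _ _
      have h2 : (0:ℝ) ≤ max (f (x + m) - μ) 0 := le_max_right _ _
      apply max_le <;> linarith
    calc ∑ x ∈ Finset.Ico a (a + m), max (f x - μ) 0
        ≤ ∑ x ∈ Finset.Ico a (a + m), ((f x - f (x + m)) + max (f (x + m) - μ) 0) :=
          Finset.sum_le_sum hterm
      _ = (Sv - Sw) + ∑ x ∈ Finset.Ico (a + m) (a + 2 * m), max (f x - μ) 0 := by
          rw [Finset.sum_add_distrib, Finset.sum_sub_distrib, hre f,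
            hre (fun x => max (f x - μ) 0)]
  have hsum_split : ∑ x ∈ Finset.Ico a (a + 2 * m), max (f x - μ) 0
      = (∑ x ∈ Finset.Ico a (a + m), max (f x - μ) 0)
        + ∑ x ∈ Finset.Ico (a + m) (a + 2 * m), max (f x - μ) 0 := by
    rw [Finset.sum_Ico_consecutive] <;> omega
  rw [hflip, hsum_split]
  linarith
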